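/- Let p, q be integers with 2 ≤ p < q and gcd(p, q) = 1, let G = ⟨x, y ∣ x^p = y^q⟩, and let f : G →* H be a surjective group homomorphism onto a non-abelian group H. Then, with commutator convention [a,b] = a⁻¹b⁻¹ab, the element f([x, y]) is a generalized torsion element of H. -/

import Mathlib

/-- `g` is a generalized torsion element of `G`: `g ≠ 1` and some non-empty
finite product of conjugates of `g` equals `1`. -/
def IsGeneralizedTorsion {G : Type*} [Group G] (g : G) : Prop :=
  g ≠ 1 ∧ ∃ xs : List G, xs ≠ [] ∧ (xs.map (fun x => x * g * x⁻¹)).prod = 1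

/-- The commutator, with the convention `[a,b] = a⁻¹b⁻¹ab`. -/
def com {G : Type*} [Group G] (a b : G) : G := a⁻¹ * b⁻¹ * a * b

/-- The single relator `x^p y^{-q}` of the `(p,q)`-torus knot group
`⟨x, y ∣ x^p = y^q⟩`; generator `0` is `x` and generator `1` is `y`. -/
def torusRels (p q : ℤ) : Set (FreeGroup (Fin 2)) :=
  {FreeGroup.of 0 ^ p * (FreeGroup.of 1 ^ q)⁻¹}

private lemma conj_list_prod {H : Type*} [Group H] (c w : H) (xs : List H) :
    ((xs.map (fun t => w * t)).map (fun t => t * c * t⁻¹)).prod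
      = w * (xs.map (fun t => t * c * t⁻¹)).prod * w⁻¹ := by
  induction xs with
  | nil => simp
  | cons a l ih =>
      simp only [List.map_cons, List.prod_cons, ih]
      group

private lemma com_mul_right {H : Type*} [Group H] (u b c : H) :
    com u (b * c) = com u c * (c⁻¹ * com u b * c) := by
  simp only [com]; group

private lemma exists_conj_list {H : Type*} [Group H] (u v : H) (n : ℕ) :
    ∃ xs : List H, xs.length = n ∧
      (xs.map (fun t => t * com u v * t⁻¹)).prod = com u (v ^ n) := by
  induction n with
  | zero => exact ⟨[], rfl, by simp [com]⟩
  | succ n ih =>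
      obtain ⟨xs, hlen, hprod⟩ := ih
      refine ⟨(1 : H) :: xs.map (fun t => v⁻¹ * t), by simp [hlen], ?_⟩
      have : com u (v ^ (n + 1)) = com u v * (v⁻¹ * com u (v ^ n) * v) := by
        rw [pow_succ, com_mul_right]
      rw [this, ← hprod, List.map_cons, List.prod_cons, conj_list_prod]
      group

/-- If `f` is a surjection from the `(p,q)`-torus knot group
`⟨x, y ∣ x^p = y^q⟩` (with `2 ≤ p < q`, `gcd(p,q) = 1`) onto a non-abelian
group `H`, then `f([x,y])` is a generalized torsion element of `H`. -/
theorem torusKnotGroup_quotient_commutator_isGeneralizedTorsion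
    (p q : ℤ) (hp : 2 ≤ p) (hpq : p < q) (hgcd : Int.gcd p q = 1)
    {H : Type*} [Group H] (f : PresentedGroup (torusRels p q) →* H)
    (hf : Function.Surjective f) (hH : ∃ a b : H, a * b ≠ b * a) :
    IsGeneralizedTorsion
      (f (com (PresentedGroup.of 0) (PresentedGroup.of 1))) := by
  set u : H := f (PresentedGroup.of 0) with hu
  set v : H := f (PresentedGroup.of 1) with hv
  -- the relation in the presented group
  have hrel : (PresentedGroup.of 0 : PresentedGroup (torusRels p q)) ^ p
      = (PresentedGroup.of 1 : PresentedGroup (torusRels p q)) ^ q := by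
    have hmem : (FreeGroup.of 0 ^ p * (FreeGroup.of (1 : Fin 2) ^ q)⁻¹)
        ∈ Subgroup.normalClosure (torusRels p q) :=
      Subgroup.subset_normalClosure rfl
    have h1 : (PresentedGroup.mk (torusRels p q))
        (FreeGroup.of 0 ^ p * (FreeGroup.of (1 : Fin 2) ^ q)⁻¹) = 1 :=
      (QuotientGroup.eq_one_iff _).mpr hmem
    rw [map_mul, map_inv, map_zpow, map_zpow, mul_inv_eq_one] at h1
    exact h1
  have huv : u ^ p = v ^ q := by
    rw [hu, hv, ← map_zpow, ← map_zpow, hrel]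
  -- the image of the commutator
  have hcom : f (com (PresentedGroup.of 0) (PresentedGroup.of 1)) = com u v := by
    simp [com, map_mul, map_inv, hu, hv]
  rw [hcom]
  constructor
  · -- nontriviality
    intro hone
    have hcuv : u * v = v * u := by
      have := hone
      rw [com] at this
      have h := congrArg (fun t => v * u * t) this
      simp only [mul_one] at h
      calc u * v = v * u * (u⁻¹ * v⁻¹ * u * v) := by group
        _ = v * u := by rw [this]; group
    -- every generator's image commutes with u and v
    have hS : ∀ g : PresentedGroup (torusRels p q),
        f g ∈ Subgroup.centralizer ({u, v} : Set H) := by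
      intro g
      refine PresentedGroup.generated_by _ ((Subgroup.centralizer _).comap f) ?_ g
      intro j
      have hj : j = 0 ∨ j = 1 := by omega
      rcases hj with hj | hj <;> subst hj <;>
        · refine Subgroup.mem_centralizer_iff.mpr ?_
          rintro h (rfl | rfl) <;> simp [hcuv, hu, hv, show f (PresentedGroup.of 0) * f (PresentedGroup.of 1) = f (PresentedGroup.of 1) * f (PresentedGroup.of 0) from hcuv]
    -- hence all images commute with all images
    have hall : ∀ g h : PresentedGroup (torusRels p q), f g * f h = f h * f g := by
      intro g h
      have hh : f h ∈ Subgroup.centralizer (Set.range f) := by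
        refine PresentedGroup.generated_by _
          ((Subgroup.centralizer (Set.range f)).comap f) ?_ h
        intro j
        have hj : j = 0 ∨ j = 1 := by omega
        refine Subgroup.mem_centralizer_iff.mpr ?_
        rintro x ⟨w, rfl⟩
        have hw := hS w
        rw [Subgroup.mem_centralizer_iff] at hw
        rcases hj with hj | hj <;> subst hj
        · exact (hw u (by simp)).symm
        · exact (hw v (by simp)).symm
      rw [Subgroup.mem_centralizer_iff] at hh
      exact hh (f g) ⟨g, rfl⟩
    obtain ⟨a, b, hab⟩ := hH
    obtain ⟨ga, rfl⟩ := hf a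
    obtain ⟨gb, rfl⟩ := hf b
    exact hab (hall ga gb)
  · -- the generalized torsion relation
    have hq0 : 0 < q := by omega
    obtain ⟨xs, hlen, hprod⟩ := exists_conj_list u v q.toNat
    refine ⟨xs, ?_, ?_⟩
    · intro hnil
      rw [hnil] at hlen
      simp at hlen
      omega
    · rw [hprod]
      have hvq : v ^ q.toNat = v ^ q := by
        rw [← zpow_natCast, Int.toNat_of_nonneg hq0.le]
      rw [hvq, ← huv, com]
      have hc : u * u ^ p = u ^ p * u := ((Commute.refl u).zpow_right p).eq
      rw [mul_assoc (u⁻¹ * (u ^ p)⁻¹), hc]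
      group
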